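/- Let n ≥ 1 and let μ be a weak composition of n. A maximal chain of the interval [0̂, ([n],μ)] of B_n^w is ascent-free (its label word has no index i with label_i strictly smaller than label_{i+1} in the product order) if and only if it equals c(σ,c) for some ascent-free colored permutation (σ,c) of content μ. Hence the set of ascent-free maximal chains of [0̂, ([n],μ)] is exactly { c(σ,c) : (σ,c) ∈ Ninc_μ }. -/

import Mathlib

/-!
STATEMENT 9: the ascent-free maximal chains of the interval [0̂, ([n],μ)] of B_n^w are
exactly the chains c(σ,c) for (σ,c) ∈ Ninc_μ.

Weak compositions are modeled as multisets of colors (color j appearing μ(j) times);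
e_r corresponds to {r}.  Chains are lists from bottom to top, maximal chains of [x,y]
are cover-chains from x to y, and the label of a cover step (A,ν) ⋖ (A∪{x},ν+e_i) is
(x,i).  A chain is ascent-free when no consecutive pair of labels strictly increases in
the product order.
-/

/-- The weighted boolean algebra `B_n^w`. -/
@[ext] structure WSub (n : ℕ) where
  carrier : Finset (Fin n)
  wt : Multiset ℕ
  card_eq : Multiset.card wt = carrier.card

instance {n : ℕ} : PartialOrder (WSub n) where
  le p q := p.carrier ⊆ q.carrier ∧ p.wt ≤ q.wt
  le_refl p := ⟨subset_rfl, le_rfl⟩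
  le_trans a b c hab hbc := ⟨hab.1.trans hbc.1, hab.2.trans hbc.2⟩
  le_antisymm a b hab hba :=
    WSub.ext (Finset.Subset.antisymm hab.1 hba.1) (le_antisymm hab.2 hba.2)

/-- The label of the covering step `p ⋖ q`: (new letter, new color). -/
def lab {n : ℕ} (p q : WSub n) : ℕ × ℕ :=
  (∑ x ∈ q.carrier \ p.carrier, (x : ℕ), (q.wt - p.wt).sum)

/-- The label word of a chain (listed bottom to top). -/
def labelWord {n : ℕ} (c : List (WSub n)) : List (ℕ × ℕ) :=
  List.zipWith lab c c.tail

def chainElt {n : ℕ} (σ : Equiv.Perm (Fin n)) (c : Fin n → ℕ) (i : ℕ) : WSub n :=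
  ⟨(Finset.univ.filter (fun p : Fin n => (p : ℕ) < i)).image σ,
   (Finset.univ.filter (fun p : Fin n => (p : ℕ) < i)).val.map (fun p => c (σ p)),
   by rw [Multiset.card_map, Finset.card_image_of_injective _ σ.injective]; rfl⟩

/-- The maximal chain `c(σ,c)` associated with a colored permutation `(σ,c)`. -/
def chainOf {n : ℕ} (σ : Equiv.Perm (Fin n)) (c : Fin n → ℕ) : List (WSub n) :=
  (List.range (n + 1)).map (chainElt σ c)

def IsMaxChain' {α : Type*} [PartialOrder α] (x y : α) (c : List α) : Prop :=
  c.Chain' (· ⋖ ·) ∧ c.head? = some x ∧ c.getLast? = some y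

def content {n : ℕ} (c : Fin n → ℕ) : Multiset ℕ := Finset.univ.val.map c

/-- An ascent of the colored permutation `(σ, c)`. -/
def HasAscent {n : ℕ} {C : Type*} [Preorder C] (σ : Equiv.Perm (Fin n)) (c : Fin n → C) : Prop :=
  ∃ i : ℕ, ∃ h : i + 1 < n,
    σ ⟨i, Nat.lt_of_succ_lt h⟩ < σ ⟨i + 1, h⟩ ∧
      c (σ ⟨i, Nat.lt_of_succ_lt h⟩) ≤ c (σ ⟨i + 1, h⟩)

theorem WSub.le_def {n : ℕ} {p q : WSub n} : p ≤ q ↔ p.carrier ⊆ q.carrier ∧ p.wt ≤ q.wt :=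
  Iff.rfl

theorem wsub_eq_of_le_of_card {n : ℕ} {p q : WSub n} (h : p ≤ q)
    (hc : q.carrier.card ≤ p.carrier.card) : p = q := by
  have h1 : p.carrier = q.carrier := Finset.eq_of_subset_of_card_le h.1 hc
  refine WSub.ext h1 ?_
  refine Multiset.eq_of_le_of_card_le h.2 ?_
  rw [p.card_eq, q.card_eq, h1]

theorem wsub_covby_iff {n : ℕ} {p q : WSub n} :
    p ⋖ q ↔ ∃ x, x ∉ p.carrier ∧ ∃ i, q.carrier = insert x p.carrier ∧ q.wt = i ::ₘ p.wt := by
  constructor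
  · rintro ⟨hlt, hmax⟩
    have hle := hlt.le
    have hne : p ≠ q := hlt.ne
    have hcard : p.carrier.card < q.carrier.card := by
      rcases lt_or_ge p.carrier.card q.carrier.card with h | h
      · exact h
      · exact absurd (wsub_eq_of_le_of_card hle h) hne
    have hss : p.carrier ⊂ q.carrier :=
      Finset.ssubset_iff_subset_ne.mpr ⟨hle.1, fun h => by simp [h] at hcard⟩
    obtain ⟨x, hxq, hxp⟩ := Finset.exists_of_ssubset hss
    have hwcard : Multiset.card p.wt < Multiset.card q.wt := by
      rw [p.card_eq, q.card_eq]; exact hcard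
    obtain ⟨i, hi⟩ : ∃ i, i ∈ q.wt - p.wt := by
      apply Multiset.exists_mem_of_ne_zero
      intro h0
      have := Multiset.card_sub hle.2
      rw [h0] at this
      simp at this
      omega
    have hiw : i ::ₘ p.wt ≤ q.wt := by
      rw [Multiset.le_iff_count]
      intro a
      have hca := Multiset.le_iff_count.mp hle.2 a
      by_cases hai : a = i
      · subst hai
        have h0 : 0 < Multiset.count a (q.wt - p.wt) := Multiset.count_pos.mpr hi
        rw [Multiset.count_sub] at h0
        have h2 : Multiset.count a p.wt < Multiset.count a q.wt := by
          by_contra hcon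
          push_neg at hcon
          omega
        rw [Multiset.count_cons_self]
        omega
      · rw [Multiset.count_cons_of_ne hai]
        exact hca
    set m : WSub n := ⟨insert x p.carrier, i ::ₘ p.wt, by
      rw [Multiset.card_cons, p.card_eq, Finset.card_insert_of_notMem hxp]⟩ with hm
    have hpm : p < m := by
      constructor
      · exact ⟨Finset.subset_insert _ _, Multiset.le_cons_self _ _⟩
      · intro hmp
        exact hxp (hmp.1 (Finset.mem_insert_self x _))
    have hmq : m ≤ q := by
      refine ⟨?_, hiw⟩
      exact Finset.insert_subset hxq hle.1
    by_cases hmq2 : m = q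
    · exact ⟨x, hxp, i, by rw [← hmq2], by rw [← hmq2]⟩
    · exact absurd (lt_of_le_of_ne hmq hmq2) (hmax hpm)
  · rintro ⟨x, hxp, i, hc, hw⟩
    have hk : q.carrier.card = p.carrier.card + 1 := by
      rw [hc, Finset.card_insert_of_notMem hxp]
    constructor
    · constructor
      · exact ⟨by rw [hc]; exact Finset.subset_insert _ _, by rw [hw]; exact Multiset.le_cons_self _ _⟩
      · intro hqp
        exact hxp (hqp.1 (by rw [hc]; exact Finset.mem_insert_self x _))
    · rintro m hpm hmq
      have h1 : p.carrier.card < m.carrier.card := by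
        rcases lt_or_ge p.carrier.card m.carrier.card with h | h
        · exact h
        · exact absurd (wsub_eq_of_le_of_card hpm.le h) hpm.ne
      have h2 : m.carrier.card < q.carrier.card := by
        rcases lt_or_ge m.carrier.card q.carrier.card with h | h
        · exact h
        · exact absurd (wsub_eq_of_le_of_card hmq.le h) hmq.ne
      omega

section chainE
variable {n : ℕ} (σ : Equiv.Perm (Fin n)) (c : Fin n → ℕ)

theorem filter_zero' : (Finset.univ.filter (fun p : Fin n => (p : ℕ) < 0)) = ∅ := by
  ext p; simp

theorem filter_top' : (Finset.univ.filter (fun p : Fin n => (p : ℕ) < n)) = Finset.univ := by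
  ext p; simp [p.isLt]

theorem filter_succ' {k : ℕ} (hk : k < n) :
    (Finset.univ.filter (fun p : Fin n => (p : ℕ) < k + 1)) =
      insert ⟨k, hk⟩ (Finset.univ.filter (fun p : Fin n => (p : ℕ) < k)) := by
  ext p
  simp only [Finset.mem_filter, Finset.mem_univ, true_and, Finset.mem_insert, Fin.ext_iff]
  omega

theorem not_mem_filter' {k : ℕ} (hk : k < n) :
    (⟨k, hk⟩ : Fin n) ∉ (Finset.univ.filter (fun p : Fin n => (p : ℕ) < k)) := by
  simp

theorem chainElt_not_mem {k : ℕ} (hk : k < n) :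
    σ ⟨k, hk⟩ ∉ (chainElt σ c k).carrier := by
  simp only [chainElt, Finset.mem_image]
  rintro ⟨p, hp, hpe⟩
  have := σ.injective hpe
  subst this
  simp at hp

theorem chainElt_carrier_succ {k : ℕ} (hk : k < n) :
    (chainElt σ c (k + 1)).carrier = insert (σ ⟨k, hk⟩) (chainElt σ c k).carrier := by
  simp only [chainElt, filter_succ' hk, Finset.image_insert]

theorem chainElt_wt_succ {k : ℕ} (hk : k < n) :
    (chainElt σ c (k + 1)).wt = c (σ ⟨k, hk⟩) ::ₘ (chainElt σ c k).wt := by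
  simp only [chainElt, filter_succ' hk,
    Finset.insert_val_of_notMem (not_mem_filter' hk), Multiset.map_cons]

theorem chainElt_covby {k : ℕ} (hk : k < n) :
    chainElt σ c k ⋖ chainElt σ c (k + 1) :=
  wsub_covby_iff.mpr ⟨σ ⟨k, hk⟩, chainElt_not_mem σ c hk, c (σ ⟨k, hk⟩),
    chainElt_carrier_succ σ c hk, chainElt_wt_succ σ c hk⟩

theorem chainElt_zero : chainElt σ c 0 = ⟨∅, 0, by simp⟩ := by
  refine WSub.ext ?_ ?_ <;> simp [chainElt, filter_zero']

theorem chainElt_top :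
    (chainElt σ c n).carrier = Finset.univ ∧
      (chainElt σ c n).wt = Finset.univ.val.map c := by
  constructor
  · simp only [chainElt, filter_top']
    rw [← Finset.map_univ_equiv σ.symm]
    ext p
    simp [Finset.mem_image, Finset.mem_map, Equiv.toEmbedding]
  · simp only [chainElt, filter_top']
    have : (Finset.univ.val.map (fun p => c (σ p))) = (Finset.univ.val.map σ).map c := by
      rw [Multiset.map_map]; rfl
    rw [this]
    congr 1
    have := Finset.map_univ_equiv (σ.symm)
    rw [show ⇑σ = ⇑(σ.symm.symm) from rfl]
    calc (Finset.univ.val.map ⇑σ.symm.symm) = (Finset.univ.map σ.symm.symm.toEmbedding).val := rfl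
    _ = Finset.univ.val := by rw [Finset.map_univ_equiv]

theorem lab_chainElt {k : ℕ} (hk : k < n) :
    lab (chainElt σ c k) (chainElt σ c (k + 1)) =
      ((σ ⟨k, hk⟩ : ℕ), c (σ ⟨k, hk⟩)) := by
  have hx := chainElt_not_mem σ c hk
  rw [lab, chainElt_carrier_succ σ c hk, chainElt_wt_succ σ c hk]
  have h1 : insert (σ ⟨k, hk⟩) (chainElt σ c k).carrier \ (chainElt σ c k).carrier
      = {σ ⟨k, hk⟩} := by
    ext p
    simp only [Finset.mem_sdiff, Finset.mem_insert, Finset.mem_singleton]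
    constructor
    · rintro ⟨hp | hp, hnp⟩
      · exact hp
      · exact absurd hp hnp
    · rintro rfl; exact ⟨Or.inl rfl, hx⟩
  have h2 : (c (σ ⟨k, hk⟩) ::ₘ (chainElt σ c k).wt) - (chainElt σ c k).wt
      = {c (σ ⟨k, hk⟩)} := by
    rw [← Multiset.singleton_add]
    exact add_tsub_cancel_right _ _
  rw [h1, h2, Finset.sum_singleton, Multiset.sum_singleton]
end chainE

section chainO
variable {n : ℕ} (σ : Equiv.Perm (Fin n)) (c : Fin n → ℕ)

theorem chainOf_length : (chainOf σ c).length = n + 1 := by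
  simp [chainOf]

theorem chainOf_getElem {k : ℕ} (hk : k < (chainOf σ c).length) :
    (chainOf σ c)[k] = chainElt σ c k := by
  simp [chainOf]

theorem chainOf_ne_nil : chainOf σ c ≠ [] := by
  intro h
  have := chainOf_length σ c
  rw [h] at this
  simp at this

theorem chainOf_head? : (chainOf σ c).head? = some (⟨∅, 0, by simp⟩ : WSub n) := by
  rw [List.head?_eq_head (chainOf_ne_nil σ c), List.head_eq_getElem,
    chainOf_getElem σ c, chainElt_zero]

theorem chainOf_getLast? :
    (chainOf σ c).getLast? =
      some (⟨Finset.univ, Finset.univ.val.map c, by simp⟩ : WSub n) := by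
  rw [List.getLast?_eq_getLast (chainOf_ne_nil σ c), List.getLast_eq_getElem,
    Option.some_inj]
  have hl := chainOf_length σ c
  have h1 : (chainOf σ c).length - 1 = n := by omega
  have := chainOf_getElem σ c (k := (chainOf σ c).length - 1)
    (by omega)
  rw [this, h1]
  obtain ⟨ht1, ht2⟩ := chainElt_top σ c
  exact WSub.ext ht1 ht2

theorem chainOf_chain' : (chainOf σ c).Chain' (· ⋖ ·) := by
  rw [List.Chain', List.isChain_iff_getElem]
  intro i h
  rw [chainOf_length] at h
  simp only [List.get_eq_getElem, chainOf_getElem]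
  exact chainElt_covby σ c (by omega)

theorem labelWord'_length :
    (List.zipWith lab (chainOf σ c) (chainOf σ c).tail).length = n := by
  rw [List.length_zipWith, List.length_tail, chainOf_length]
  simp

theorem labelWord'_getElem {k : ℕ} (hk : k < n) :
    (List.zipWith lab (chainOf σ c) (chainOf σ c).tail)[k]'(by
      rw [labelWord'_length]; exact hk) =
      ((σ ⟨k, hk⟩ : ℕ), c (σ ⟨k, hk⟩)) := by
  rw [List.getElem_zipWith, List.getElem_tail, chainOf_getElem, chainOf_getElem]
  exact lab_chainElt σ c hk

end chainO

theorem pairLt_iff {n : ℕ} (σ : Equiv.Perm (Fin n)) (c : Fin n → ℕ) {a b : Fin n} (hab : a ≠ b) :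
    (((σ a : ℕ), c (σ a)) < ((σ b : ℕ), c (σ b))) ↔ (σ a < σ b ∧ c (σ a) ≤ c (σ b)) := by
  have hne : ((σ a : ℕ)) ≠ ((σ b : ℕ)) := by
    intro h
    exact hab (σ.injective (Fin.ext h))
  rw [Prod.lt_iff]
  constructor
  · rintro (⟨h1, h2⟩ | ⟨h1, h2⟩)
    · exact ⟨h1, h2⟩
    · exact ⟨Fin.lt_def.mpr (lt_of_le_of_ne h1 hne), le_of_lt h2⟩
  · rintro ⟨h1, h2⟩
    exact Or.inl ⟨h1, h2⟩

theorem labelWord'_chain'_iff {n : ℕ} (σ : Equiv.Perm (Fin n)) (c : Fin n → ℕ) :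
    (List.zipWith lab (chainOf σ c) (chainOf σ c).tail).Chain' (fun a b => ¬ a < b) ↔
      ¬ HasAscent σ c := by
  rw [List.Chain', List.isChain_iff_getElem]
  have hlen := labelWord'_length σ c
  constructor
  · intro h hasc
    obtain ⟨i, hi, h1, h2⟩ := hasc
    have hi' : i + 1 < (List.zipWith lab (chainOf σ c) (chainOf σ c).tail).length := by omega
    refine h i hi' ?_
    rw [labelWord'_getElem σ c (show i < n from Nat.lt_of_succ_lt hi),
      labelWord'_getElem σ c hi]
    rw [pairLt_iff σ c (by simp [Fin.ext_iff])]
    exact ⟨h1, h2⟩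
  · intro h i hi hlt
    have hi2 : i + 1 < n := by omega
    apply h
    refine ⟨i, hi2, ?_⟩
    rw [labelWord'_getElem σ c (show i < n from Nat.lt_of_succ_lt hi2),
      labelWord'_getElem σ c hi2] at hlt
    rw [pairLt_iff σ c (by simp [Fin.ext_iff])] at hlt
    exact hlt

theorem exists_chainOf {n : ℕ} (μ : Multiset ℕ) (hμc : Multiset.card μ = n)
    (d : List (WSub n)) (hch : d.Chain' (· ⋖ ·))
    (hh : d.head? = some (⟨∅, 0, by simp⟩ : WSub n))
    (hl : d.getLast? = some (⟨Finset.univ, μ, by simp [hμc]⟩ : WSub n)) :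
    ∃ σ : Equiv.Perm (Fin n), ∃ c : Fin n → ℕ,
      Finset.univ.val.map c = μ ∧ d = chainOf σ c := by
  have hne : d ≠ [] := by rintro rfl; simp at hh
  have hpos : 0 < d.length := List.length_pos_iff.mpr hne
  have hD0 : d[0]'hpos = (⟨∅, 0, by simp⟩ : WSub n) := by
    rw [List.head?_eq_head hne, Option.some_inj] at hh
    rw [← hh, List.head_eq_getElem]
  have covstep : ∀ k, (h : k + 1 < d.length) → d[k]'(by omega) ⋖ d[k + 1]'h := by
    intro k h
    have := List.isChain_iff_getElem.mp hch k (by omega)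
    simpa using this
  have cards : ∀ k, (hk : k < d.length) → (d[k]'hk).carrier.card = k := by
    intro k
    induction k with
    | zero => intro hk; rw [hD0]; simp
    | succ k ih =>
      intro hk
      obtain ⟨x, hx, i, hcar, hwt⟩ := wsub_covby_iff.mp (covstep k hk)
      rw [hcar, Finset.card_insert_of_notMem hx, ih (by omega)]
  have hlast : d[d.length - 1]'(by omega) =
      (⟨Finset.univ, μ, by simp [hμc]⟩ : WSub n) := by
    rw [List.getLast?_eq_getLast hne, Option.some_inj] at hl
    rw [← hl, List.getLast_eq_getElem]
  have hlen : d.length = n + 1 := by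
    have := cards (d.length - 1) (by omega)
    rw [hlast] at this
    simp [Finset.card_univ] at this
    omega
  have hex : ∀ k, (hk : k < n) → ∃ x, x ∉ (d[k]'(by omega)).carrier ∧ ∃ i,
      (d[k + 1]'(by omega)).carrier = insert x (d[k]'(by omega)).carrier ∧
      (d[k + 1]'(by omega)).wt = i ::ₘ (d[k]'(by omega)).wt := by
    intro k hk
    exact wsub_covby_iff.mp (covstep k (by omega))
  choose x hx i hcar hwt using hex
  have hmono : ∀ j k, (hj : j ≤ k) → (hk : k < d.length) → d[j]'(by omega) ≤ d[k]'hk := by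
    have hle : d.Chain' (· ≤ ·) := hch.imp (fun a b h => h.le)
    have hpw : d.Pairwise (· ≤ ·) := List.isChain_iff_pairwise.mp hle
    rw [List.pairwise_iff_get] at hpw
    intro j k hj hk
    rcases eq_or_lt_of_le hj with rfl | hlt
    · exact le_rfl
    · exact hpw ⟨j, by omega⟩ ⟨k, hk⟩ hlt
  have hxmem : ∀ k (hk : k < n), x k hk ∈ (d[k + 1]'(by omega)).carrier := by
    intro k hk
    rw [hcar k hk]
    exact Finset.mem_insert_self _ _
  have hxlt : ∀ j k (hj : j < n) (hk : k < n), j < k → x j hj ≠ x k hk := by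
    intro j k hj hk hjk heq
    apply hx k hk
    rw [← heq]
    exact (hmono (j + 1) k (by omega) (by omega)).1 (hxmem j hj)
  set X : Fin n → Fin n := fun k => x k k.isLt with hX
  have hXinj : Function.Injective X := by
    intro a b hab
    by_contra hne2
    rcases lt_trichotomy a b with h | h | h
    · exact hxlt a b a.isLt b.isLt h hab
    · exact hne2 h
    · exact hxlt b a b.isLt a.isLt h hab.symm
  have hXbij : Function.Bijective X := Finite.injective_iff_bijective.mp hXinj
  set σ : Equiv.Perm (Fin n) := Equiv.ofBijective X hXbij with hσdef
  have hσ : ∀ k : Fin n, σ k = X k := fun k => rfl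
  set c : Fin n → ℕ := fun v => i (σ.symm v) (σ.symm v).isLt with hc
  have hcx : ∀ k : Fin n, c (X k) = i k k.isLt := by
    intro k
    have : σ.symm (X k) = k := by rw [← hσ k, Equiv.symm_apply_apply]
    simp only [hc, this]
  have key : ∀ k, (hk : k < d.length) → d[k]'hk = chainElt σ c k := by
    intro k
    induction k with
    | zero => intro hk; rw [hD0, chainElt_zero]
    | succ k ih =>
      intro hk
      have hkn : k < n := by omega
      have hkf : X ⟨k, hkn⟩ = x k hkn := rfl
      refine WSub.ext ?_ ?_
      · rw [hcar k hkn, chainElt_carrier_succ σ c hkn, ih (by omega), hσ, hkf]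
      · rw [hwt k hkn, chainElt_wt_succ σ c hkn, ih (by omega)]
        exact congrArg (fun t => t ::ₘ (chainElt σ c k).wt) (hcx ⟨k, hkn⟩).symm
  refine ⟨σ, c, ?_, ?_⟩
  · obtain ⟨-, ht2⟩ := chainElt_top σ c
    have h2 : d[n]'(by omega) = (⟨Finset.univ, μ, by simp [hμc]⟩ : WSub n) := by
      simp only [show d.length - 1 = n from by omega] at hlast
      exact hlast
    have h3 : (chainElt σ c n).wt = μ := by rw [← key n (by omega), h2]
    rw [← ht2]
    exact h3
  · refine List.ext_getElem (by rw [hlen, chainOf_length]) ?_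
    intro k h1 h2
    rw [key k h1, chainOf_getElem]

theorem ascent_free_chains_are_ninc (n : ℕ) (hn : 1 ≤ n) (μ : Multiset ℕ)
    (hμ : Multiset.card μ = n) :
    {d : List (WSub n) |
        IsMaxChain' (⟨∅, 0, by simp⟩ : WSub n) (⟨Finset.univ, μ, by simp [hμ]⟩ : WSub n) d ∧
          (labelWord d).Chain' (fun a b => ¬ a < b)} =
      (fun w : Equiv.Perm (Fin n) × (Fin n → ℕ) => chainOf w.1 w.2) ''
        {w | content w.2 = μ ∧ ¬ HasAscent w.1 w.2} := by
  ext d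
  simp only [Set.mem_setOf_eq, Set.mem_image]
  constructor
  · rintro ⟨⟨hch, hh, hl⟩, hasc⟩
    obtain ⟨σ, c, hcont, hdeq⟩ := exists_chainOf μ hμ d hch hh hl
    refine ⟨(σ, c), ⟨hcont, ?_⟩, hdeq.symm⟩
    rw [hdeq] at hasc
    exact (labelWord'_chain'_iff σ c).mp hasc
  · rintro ⟨⟨σ, c⟩, ⟨hcont, hasc⟩, rfl⟩
    refine ⟨⟨chainOf_chain' σ c, chainOf_head? σ c, ?_⟩, ?_⟩
    · rw [chainOf_getLast?, Option.some_inj]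
      exact WSub.ext rfl hcont
    · exact (labelWord'_chain'_iff σ c).mpr hasc
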